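/- For positive integers N₁, …, N_{2q}, define N₀ = 1 and let the physical array be the union over i = 1,…,2q−1 of the sets { n·∏_{k=0}^{i−1} N_k : n = 1,…,N_i − 1 } together with { n·∏_{k=0}^{2q−1} N_k : n = 1,…,N_{2q} }. Then the 2q-th order virtual array S_q of this physical array contains the set of consecutive integers {−(∏_{k=1}^{2q} N_k − 1), …, ∏_{k=1}^{2q} N_k − 1}, i.e., a uniform linear array of size 2∏_{k=0}^{2q} N_k − 1. -/
import Mathlib

open Finset

private lemma intG (a b K : ℤ) (hb : 0 < b) (ha : 0 ≤ a) (haK : a ≤ K * b - 1) :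
    ∃ c : ℤ, 1 ≤ c ∧ c ≤ K ∧ 1 ≤ c * b - a ∧ c * b - a ≤ b := by
  refine ⟨a / b + 1, ?_, ?_, ?_, ?_⟩
  · have := Int.ediv_nonneg ha hb.le; omega
  · have : a / b < K := by
      rw [Int.ediv_lt_iff_lt_mul hb]; nlinarith
    omega
  · have h1 := Int.mul_ediv_add_emod a b
    have h2 := Int.emod_lt_of_pos a hb
    have h3 : (a / b + 1) * b = b * (a / b) + b := by ring
    omega
  · have h1 := Int.mul_ediv_add_emod a b
    have h2 := Int.emod_nonneg a hb.ne'
    have h3 : (a / b + 1) * b = b * (a / b) + b := by ring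
    omega

private lemma memA_aux (q : ℕ) (N : ℕ → ℕ)
    (hNpos : ∀ i, 1 ≤ i → i ≤ 2 * q → 0 < N i)
    (A : Set ℤ)
    (hA : A = (⋃ i ∈ Finset.Icc 1 (2 * q - 1),
        {x : ℤ | ∃ n : ℕ, 1 ≤ n ∧ n ≤ N i - 1 ∧
          x = (n : ℤ) * ∏ k ∈ Finset.range i, (N k : ℤ)}) ∪
      {x : ℤ | ∃ n : ℕ, 1 ≤ n ∧ n ≤ N (2 * q) ∧
          x = (n : ℤ) * ∏ k ∈ Finset.range (2 * q), (N k : ℤ)}) :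
    ∀ d i, i + d = 2 * q → 1 ≤ i → ∀ x : ℤ, 1 ≤ x → x ≤ (N i : ℤ) →
      x * ∏ k ∈ Finset.range i, (N k : ℤ) ∈ A := by
  intro d
  induction d with
  | zero =>
    intro i hi h1 x hx1 hx2
    subst hA
    right
    refine ⟨x.toNat, ?_, ?_, ?_⟩
    · omega
    · have hi' : i = 2 * q := by omega
      subst hi'
      omega
    · have hi' : i = 2 * q := by omega
      subst hi'
      rw [Int.toNat_of_nonneg (by omega)]
  | succ d ih =>
    intro i hi h1 x hx1 hx2
    by_cases hx : x ≤ (N i : ℤ) - 1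
    · subst hA
      left
      simp only [Set.mem_iUnion, Set.mem_setOf_eq]
      refine ⟨i, ?_, x.toNat, ?_, ?_, ?_⟩
      · simp only [Finset.mem_Icc]; omega
      · omega
      · omega
      · rw [Int.toNat_of_nonneg (by omega)]
    · have hxe : x = (N i : ℤ) := by omega
      have key : x * ∏ k ∈ Finset.range i, (N k : ℤ)
          = 1 * ∏ k ∈ Finset.range (i + 1), (N k : ℤ) := by
        rw [Finset.prod_range_succ, hxe]; ring
      rw [key]
      have hN1 : 0 < N (i + 1) := hNpos (i + 1) (by omega) (by omega)
      exact ih (i + 1) (by omega) (by omega) 1 le_rfl (by exact_mod_cast hN1)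

private lemma main_aux (q : ℕ) (N : ℕ → ℕ) (hN0 : N 0 = 1)
    (hNpos : ∀ i, 1 ≤ i → i ≤ 2 * q → 0 < N i)
    (A : Set ℤ)
    (memA : ∀ i, 1 ≤ i → i ≤ 2 * q → ∀ x : ℤ, 1 ≤ x → x ≤ (N i : ℤ) →
      x * ∏ k ∈ Finset.range i, (N k : ℤ) ∈ A) :
    ∀ j, j ≤ q → ∀ m : ℤ, 0 ≤ m →
      m ≤ (∏ k ∈ Finset.range (2 * j + 1), (N k : ℤ)) - 1 →
      ∃ f g : Fin j → ℤ, (∀ i, f i ∈ A) ∧ (∀ i, g i ∈ A) ∧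
        m = (∑ i, f i) - ∑ i, g i := by
  intro j
  induction j with
  | zero =>
    intro _ m hm0 hm1
    have : (∏ k ∈ Finset.range (2 * 0 + 1), (N k : ℤ)) = 1 := by
      simp [hN0]
    rw [this] at hm1
    have hm : m = 0 := by omega
    exact ⟨Fin.elim0, Fin.elim0, fun i => i.elim0, fun i => i.elim0, by simp [hm]⟩
  | succ j ih =>
    intro hj m hm0 hm1
    set P1 : ℤ := ∏ k ∈ Finset.range (2 * j + 1), (N k : ℤ) with hP1
    have hP1pos : 0 < P1 := by
      apply Finset.prod_pos
      intro k hk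
      simp only [Finset.mem_range] at hk
      rcases Nat.eq_zero_or_pos k with h | h
      · simp [h, hN0]
      · exact_mod_cast hNpos k h (by omega)
    have hN1pos : 0 < (N (2 * j + 1) : ℤ) := by
      exact_mod_cast hNpos (2 * j + 1) (by omega) (by omega)
    have hN2pos : 0 < (N (2 * j + 2) : ℤ) := by
      exact_mod_cast hNpos (2 * j + 2) (by omega) (by omega)
    set P2 : ℤ := ∏ k ∈ Finset.range (2 * j + 2), (N k : ℤ) with hP2
    have hP2eq : P2 = P1 * (N (2 * j + 1) : ℤ) := by
      rw [hP2, hP1, Finset.prod_range_succ]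
    have hP2pos : 0 < P2 := by rw [hP2eq]; positivity
    have hP3 : (∏ k ∈ Finset.range (2 * (j + 1) + 1), (N k : ℤ))
        = P2 * (N (2 * j + 2) : ℤ) := by
      rw [hP2]
      have : 2 * (j + 1) + 1 = (2 * j + 2) + 1 := by ring
      rw [this, Finset.prod_range_succ]
    rw [hP3] at hm1
    obtain ⟨x, hx1, hx2, hs1, hs2⟩ :=
      intG m P2 (N (2 * j + 2)) hP2pos hm0 (by linarith [hm1])
    set s : ℤ := x * P2 - m with hs
    obtain ⟨y, hy1, hy2, ht1, ht2⟩ :=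
      intG (s - 1) P1 (N (2 * j + 1)) hP1pos (by omega) (by rw [hP2eq] at hs2; linarith)
    set m' : ℤ := y * P1 - s with hm'
    have hm'0 : 0 ≤ m' := by omega
    have hm'1 : m' ≤ P1 - 1 := by omega
    obtain ⟨f', g', hf', hg', hrep⟩ := ih (by omega) m' hm'0 hm'1
    refine ⟨Fin.cons (x * P2) f', Fin.cons (y * P1) g', ?_, ?_, ?_⟩
    · intro i
      refine Fin.cases ?_ ?_ i
      · exact memA (2 * j + 2) (by omega) (by omega) x hx1 hx2
      · exact fun i => hf' i
    · intro i
      refine Fin.cases ?_ ?_ i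
      · exact memA (2 * j + 1) (by omega) (by omega) y hy1 hy2
      · exact fun i => hg' i
    · rw [Fin.sum_cons, Fin.sum_cons]
      have : m = x * P2 - y * P1 + m' := by omega
      linarith [hrep, this]

theorem nested_array_virtual_ula (q : ℕ) (hq : 0 < q) (N : ℕ → ℕ)
    (hN0 : N 0 = 1) (hNpos : ∀ i, 1 ≤ i → i ≤ 2 * q → 0 < N i)
    (A : Set ℤ)
    (hA : A = (⋃ i ∈ Finset.Icc 1 (2 * q - 1),
        {x : ℤ | ∃ n : ℕ, 1 ≤ n ∧ n ≤ N i - 1 ∧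
          x = (n : ℤ) * ∏ k ∈ Finset.range i, (N k : ℤ)}) ∪
      {x : ℤ | ∃ n : ℕ, 1 ≤ n ∧ n ≤ N (2 * q) ∧
          x = (n : ℤ) * ∏ k ∈ Finset.range (2 * q), (N k : ℤ)}) :
    ∀ m : ℤ, |m| ≤ (∏ k ∈ Finset.Icc 1 (2 * q), (N k : ℤ)) - 1 →
      ∃ f g : Fin q → ℤ, (∀ i, f i ∈ A) ∧ (∀ i, g i ∈ A) ∧
        m = (∑ i, f i) - ∑ i, g i := by
  have memA := memA_aux q N hNpos A hA
  have memA' : ∀ i, 1 ≤ i → i ≤ 2 * q → ∀ x : ℤ, 1 ≤ x → x ≤ (N i : ℤ) →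
      x * ∏ k ∈ Finset.range i, (N k : ℤ) ∈ A := by
    intro i h1 h2
    exact memA (2 * q - i) i (by omega) h1
  have main := main_aux q N hN0 hNpos A memA' q le_rfl
  have hIcc : (∏ k ∈ Finset.Icc 1 (2 * q), (N k : ℤ))
      = ∏ k ∈ Finset.range (2 * q + 1), (N k : ℤ) := by
    have hset : Finset.range (2 * q + 1) = insert 0 (Finset.Icc 1 (2 * q)) := by
      ext k
      simp only [Finset.mem_range, Finset.mem_insert, Finset.mem_Icc]
      omega
    rw [hset, Finset.prod_insert (by simp), hN0]
    simp
  intro m hm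
  rw [hIcc] at hm
  rcases le_or_gt 0 m with h | h
  · exact main m h (by rwa [abs_of_nonneg h] at hm)
  · obtain ⟨f, g, hf, hg, hrep⟩ := main (-m) (by omega) (by rwa [abs_of_neg h] at hm)
    exact ⟨g, f, hg, hf, by omega⟩
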